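/- Let R be a ring and P an object of K(Prj C(R)) (a complex of projective complexes of R-modules) concentrated in non-negative rows, i.e., P^j = 0 for j < 0. Then P is contractible if and only if each row complex P^j ∈ K(Prj R) is contractible, for all j ∈ ℤ. -/

import Mathlib

open CategoryTheory CategoryTheory.Limits

noncomputable section


lemma proj_contractible {C : Type*} [Category C] [Abelian C]
    (X : CochainComplex C ℤ) (hX : Projective X) : Nonempty (Homotopy (𝟙 X) 0) := by
  haveI := hX
  set K := (X⟦(-1 : ℤ)⟧ : CochainComplex C ℤ) with hK
  let B := CochainComplex.mappingCone (𝟙 K)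
  let ε : (K⟦(1 : ℤ)⟧ : CochainComplex C ℤ) ≅ X :=
    (shiftEquiv (CochainComplex C ℤ) (1 : ℤ)).counitIso.app X
  let π : B ⟶ X := (CochainComplex.mappingCone.triangle (𝟙 K)).mor₃ ≫ ε.hom
  have hepi : Epi π := by
    apply HomologicalComplex.epi_of_epi_f
    intro n
    have h := CochainComplex.mappingCone.inl_v_triangle_mor₃_f (𝟙 K) (n+1) n (by omega)
    have : IsSplitEpi (π.f n) := by
      refine ⟨⟨⟨ε.inv.f n ≫ (K.shiftFunctorObjXIso 1 n (n+1) (by omega)).hom ≫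
        (-(CochainComplex.mappingCone.inl (𝟙 K)).v (n+1) n (by omega)), ?_⟩⟩⟩
      let m : B ⟶ K⟦(1 : ℤ)⟧ := (CochainComplex.mappingCone.triangle (𝟙 K)).mor₃
      have h' : (CochainComplex.mappingCone.inl (𝟙 K)).v (n+1) n (by omega) ≫ m.f n =
          -(K.shiftFunctorObjXIso 1 n (n+1) (by omega)).inv := h
      have : π.f n = m.f n ≫ ε.hom.f n := by
        rfl
      rw [this]
      simp only [Category.assoc, Preadditive.neg_comp]
      rw [reassoc_of% h']
      simp only [Preadditive.neg_comp, Preadditive.comp_neg, neg_neg, Iso.hom_inv_id_assoc]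
      rw [← HomologicalComplex.comp_f, ε.inv_hom_id]
      rfl
    infer_instance
  let σ : X ⟶ B := Projective.factorThru (𝟙 X) π
  have hσ : σ ≫ π = 𝟙 X := Projective.factorThru_comp _ _
  have hB : Homotopy (𝟙 B) 0 := CochainComplex.mappingCone.homotopyToZeroOfId K
  refine ⟨(Homotopy.ofEq ?_).trans (((hB.compRight π).compLeft σ).trans (Homotopy.ofEq ?_))⟩
  · rw [← hσ]; simp
  · simp


namespace Aux12

variable {R : Type} [Ring R] (P : CochainComplex (CochainComplex (ModuleCat R) ℤ) ℤ)

abbrev Row (j : ℤ) : CochainComplex (ModuleCat R) ℤ :=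
  ((HomologicalComplex.eval (ModuleCat R) (ComplexShape.up ℤ) j).mapHomologicalComplex
    (ComplexShape.up ℤ)).obj P

variable (t : ∀ j : ℤ, Homotopy (𝟙 (Row P j)) 0)
variable (k : ∀ i : ℤ, Homotopy (𝟙 (P.X i)) 0)

def th (j i i' : ℤ) : (P.X i).X j ⟶ (P.X i').X j := (t j).hom i i'

lemma comm_t (j i p q : ℤ) (hp : i + 1 = p) (hq : q + 1 = i) :
    𝟙 ((P.X i).X j) = (P.d i p).f j ≫ th P t j p i + th P t j i q ≫ (P.d q i).f j := by
  have h := (t j).comm i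
  rw [dNext_eq _ (show (ComplexShape.up ℤ).Rel i p by simpa using hp),
      prevD_eq _ (show (ComplexShape.up ℤ).Rel q i by simpa using hq)] at h
  simp at h
  exact h

lemma comm_k (i r rp rm : ℤ) (h1 : r + 1 = rp) (h2 : rm + 1 = r) :
    𝟙 ((P.X i).X r) =
      (P.X i).d r rp ≫ (k i).hom rp r + (k i).hom r rm ≫ (P.X i).d rm r := by
  have h := (k i).comm r
  rw [dNext_eq _ (show (ComplexShape.up ℤ).Rel r rp by simpa using h1),
      prevD_eq _ (show (ComplexShape.up ℤ).Rel rm r by simpa using h2)] at h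
  simpa using h

lemma dh_dh (a b c j : ℤ) : (P.d a b).f j ≫ (P.d b c).f j = 0 := by
  rw [← HomologicalComplex.comp_f, P.d_comp_d]
  simp

lemma hcomm (a b r r' : ℤ) :
    (P.d a b).f r ≫ (P.X b).d r r' = (P.X a).d r r' ≫ (P.d a b).f r' :=
  (P.d a b).comm r r'

def eA (j' j : ℤ) (prev : ∀ a b : ℤ, ((P.X a).X j' ⟶ (P.X b).X j')) (i i' : ℤ) :
    (P.X i).X j' ⟶ (P.X i').X j :=
  prev i i' ≫ (P.X i').d j' j - (P.X i).d j' j ≫ th P t j i i'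

def cA (j j' i : ℤ) : (P.X i).X j ⟶ (P.X (i + 1)).X j' :=
  (k i).hom j j' ≫ (P.d i (i + 1)).f j' - (P.d i (i + 1)).f j ≫ (k (i + 1)).hom j j'

def stepA (j' j : ℤ) (prev : ∀ a b : ℤ, ((P.X a).X j' ⟶ (P.X b).X j')) (i i' : ℤ) :
    (P.X i).X j ⟶ (P.X i').X j :=
  th P t j i i' + (k i).hom j j' ≫ eA P t j' j prev i i' +
    cA P k j j' i ≫ eA P t j' j prev (i + 1) i ≫ th P t j i i'

def SA : ℕ → ∀ i i' j : ℤ, ((P.X i).X j ⟶ (P.X i').X j)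
  | 0 => fun _ _ _ => 0
  | m + 1 => fun i i' j => stepA P t k (j - 1) j (fun a b => SA m a b (j - 1)) i i'

def sF (i i' j : ℤ) : (P.X i).X j ⟶ (P.X i').X j := SA P t k (j + 1).toNat i i' j

lemma sF_eq (i i' j : ℤ) (hj : 0 ≤ j) :
    sF P t k i i' j = stepA P t k (j - 1) j (fun a b => sF P t k a b (j - 1)) i i' := by
  unfold sF
  rw [show (j + 1).toNat = j.toNat + 1 by omega]
  show stepA P t k (j - 1) j (fun a b => SA P t k j.toNat a b (j - 1)) i i' = _
  congr 1
  funext a b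
  rw [show (j - 1 + 1).toNat = j.toNat by omega]

lemma SA_off (m : ℕ) (i i' j : ℤ) (h : ¬ i' + 1 = i) : SA P t k m i i' j = 0 := by
  induction m generalizing i i' j with
  | zero => rfl
  | succ m ih =>
      show stepA P t k (j - 1) j _ i i' = 0
      unfold stepA eA
      simp only []
      rw [ih i i' (j - 1) h]
      have ht : th P t j i i' = 0 := by
        unfold th
        exact (t j).zero i i' (by simpa using h)
      rw [ht]
      simp

lemma sF_off (i i' j : ℤ) (h : ¬ i' + 1 = i) : sF P t k i i' j = 0 :=
  SA_off P t k _ i i' j h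

/-- the error term is killed by the previous vertical differential -/
lemma E_lem (j : ℤ)
    (hAp : ∀ a b, (P.X a).d (j - 2) (j - 1) ≫ sF P t k a b (j - 1) =
      sF P t k a b (j - 2) ≫ (P.X b).d (j - 2) (j - 1)) (a b : ℤ) :
    (P.X a).d (j - 2) (j - 1) ≫ eA P t (j - 1) j (fun x y => sF P t k x y (j - 1)) a b = 0 := by
  unfold eA
  simp only []
  have h1 : (P.X a).d (j - 2) (j - 1) ≫ sF P t k a b (j - 1) ≫ (P.X b).d (j - 1) j = 0 := by
    rw [← Category.assoc, hAp a b, Category.assoc, HomologicalComplex.d_comp_d, comp_zero]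
  have h2 : (P.X a).d (j - 2) (j - 1) ≫ (P.X a).d (j - 1) j ≫ th P t j a b = 0 := by
    rw [← Category.assoc, HomologicalComplex.d_comp_d, zero_comp]
  rw [Preadditive.comp_sub, h1, h2, sub_zero]

/-- horizontal anticommutation of the error term -/
lemma De_lem (j i : ℤ)
    (hBp : 𝟙 ((P.X i).X (j - 1)) =
      (P.d i (i + 1)).f (j - 1) ≫ sF P t k (i + 1) i (j - 1) +
        sF P t k i (i - 1) (j - 1) ≫ (P.d (i - 1) i).f (j - 1)) :
    (P.d i (i + 1)).f (j - 1) ≫ eA P t (j - 1) j (fun x y => sF P t k x y (j - 1)) (i + 1) i =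
      - (eA P t (j - 1) j (fun x y => sF P t k x y (j - 1)) i (i - 1) ≫ (P.d (i - 1) i).f j) := by
  have E1 : (P.X i).d (j - 1) j =
      (P.d i (i + 1)).f (j - 1) ≫ sF P t k (i + 1) i (j - 1) ≫ (P.X i).d (j - 1) j +
        sF P t k i (i - 1) (j - 1) ≫ (P.d (i - 1) i).f (j - 1) ≫ (P.X i).d (j - 1) j := by
    conv_lhs => rw [← Category.id_comp ((P.X i).d (j - 1) j), hBp]
    simp [Preadditive.add_comp, Category.assoc]
  have E2 : (P.X i).d (j - 1) j =
      (P.X i).d (j - 1) j ≫ (P.d i (i + 1)).f j ≫ th P t j (i + 1) i +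
        (P.X i).d (j - 1) j ≫ th P t j i (i - 1) ≫ (P.d (i - 1) i).f j := by
    conv_lhs => rw [← Category.comp_id ((P.X i).d (j - 1) j),
      comm_t P t j i (i + 1) (i - 1) rfl (by omega)]
    simp [Preadditive.comp_add, Category.assoc]
  have hX := eq_sub_of_add_eq E1.symm
  have hY := eq_sub_of_add_eq E2.symm
  unfold eA
  simp only []
  rw [Preadditive.comp_sub, Preadditive.sub_comp]
  rw [← Category.assoc ((P.d i (i + 1)).f (j - 1)) ((P.X (i + 1)).d (j - 1) j)
    (th P t j (i + 1) i), hcomm, Category.assoc]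
  rw [Category.assoc (sF P t k i (i - 1) (j - 1)) _ _, ← hcomm]
  rw [← Category.assoc ((P.d i (i + 1)).f (j - 1)) (sF P t k (i + 1) i (j - 1)) _]
  rw [← Category.assoc (sF P t k i (i - 1) (j - 1)) ((P.d (i - 1) i).f (j - 1)) _]
  simp only [Category.assoc]
  rw [hX, hY]
  abel

/-- horizontal anticommutation of the commutator term -/
lemma Dc_lem (j i : ℤ) :
    (P.d i (i + 1)).f j ≫ cA P k j (j - 1) (i + 1) =
      - (cA P k j (j - 1) i ≫ (P.d (i + 1) (i + 1 + 1)).f (j - 1)) := by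
  unfold cA
  simp only [Preadditive.comp_sub, Preadditive.sub_comp, Category.assoc]
  rw [← Category.assoc ((P.d i (i + 1)).f j) ((P.d (i + 1) (i + 1 + 1)).f j)
    ((k (i + 1 + 1)).hom j (j - 1)), dh_dh, dh_dh]
  simp only [zero_comp, comp_zero]
  abel

/-- vertical anticommutation of the commutator term -/
lemma Cd_lem (j i : ℤ) :
    (P.X i).d (j - 1) j ≫ cA P k j (j - 1) i =
      - (cA P k (j - 1) (j - 2) i ≫ (P.X (i + 1)).d (j - 2) (j - 1)) := by
  have hK1 : (P.X i).d (j - 1) j ≫ (k i).hom j (j - 1) =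
      𝟙 ((P.X i).X (j - 1)) - (k i).hom (j - 1) (j - 2) ≫ (P.X i).d (j - 2) (j - 1) :=
    eq_sub_of_add_eq (comm_k P k i (j - 1) j (j - 2) (by omega) (by omega)).symm
  have hK2 : (P.X (i + 1)).d (j - 1) j ≫ (k (i + 1)).hom j (j - 1) =
      𝟙 ((P.X (i + 1)).X (j - 1)) -
        (k (i + 1)).hom (j - 1) (j - 2) ≫ (P.X (i + 1)).d (j - 2) (j - 1) :=
    eq_sub_of_add_eq (comm_k P k (i + 1) (j - 1) j (j - 2) (by omega) (by omega)).symm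
  unfold cA
  simp only [Preadditive.comp_sub, Preadditive.sub_comp, Category.assoc]
  rw [← Category.assoc ((P.X i).d (j - 1) j) ((k i).hom j (j - 1)) ((P.d i (i + 1)).f (j - 1)),
    hK1]
  rw [← Category.assoc ((P.X i).d (j - 1) j) ((P.d i (i + 1)).f j) ((k (i + 1)).hom j (j - 1)),
    ← hcomm, Category.assoc, hK2]
  simp only [Preadditive.sub_comp, Preadditive.comp_sub, Category.id_comp, Category.comp_id,
    Category.assoc]
  rw [← Category.assoc ((k i).hom (j - 1) (j - 2)) ((P.X i).d (j - 2) (j - 1))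
    ((P.d i (i + 1)).f (j - 1)), hcomm, Category.assoc]
  abel

lemma step_lem (j : ℤ) (hj : 0 ≤ j)
    (hBp : ∀ i, 𝟙 ((P.X i).X (j - 1)) =
      (P.d i (i + 1)).f (j - 1) ≫ sF P t k (i + 1) i (j - 1) +
        sF P t k i (i - 1) (j - 1) ≫ (P.d (i - 1) i).f (j - 1))
    (hAp : ∀ a b, (P.X a).d (j - 2) (j - 1) ≫ sF P t k a b (j - 1) =
      sF P t k a b (j - 2) ≫ (P.X b).d (j - 2) (j - 1)) :
    (∀ i, 𝟙 ((P.X i).X j) =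
      (P.d i (i + 1)).f j ≫ sF P t k (i + 1) i j +
        sF P t k i (i - 1) j ≫ (P.d (i - 1) i).f j) ∧
    (∀ i i', (P.X i).d (j - 1) j ≫ sF P t k i i' j =
      sF P t k i i' (j - 1) ≫ (P.X i').d (j - 1) j) := by
  constructor
  · intro i
    have hDe1 := De_lem P t k j i (hBp i)
    have f2 : eA P t (j - 1) j (fun x y => sF P t k x y (j - 1)) i (i - 1) ≫
        (P.d (i - 1) i).f j =
        -((P.d i (i + 1)).f (j - 1) ≫
          eA P t (j - 1) j (fun x y => sF P t k x y (j - 1)) (i + 1) i) := by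
      rw [hDe1, neg_neg]
    have hDe2 := De_lem P t k j (i + 1) (hBp (i + 1))
    rw [show i + 1 - 1 = i from by omega] at hDe2
    have f5 : eA P t (j - 1) j (fun x y => sF P t k x y (j - 1)) (i + 1) i ≫
        (P.d i (i + 1)).f j =
        -((P.d (i + 1) (i + 1 + 1)).f (j - 1) ≫
          eA P t (j - 1) j (fun x y => sF P t k x y (j - 1)) (i + 1 + 1) (i + 1)) := by
      rw [hDe2, neg_neg]
    have f5r := congrArg (fun z => z ≫ th P t j (i + 1) i) f5
    simp only [Category.assoc, Preadditive.neg_comp] at f5r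
    have hDc := Dc_lem P k j i
    have f6 : cA P k j (j - 1) i ≫ (P.d (i + 1) (i + 1 + 1)).f (j - 1) =
        -((P.d i (i + 1)).f j ≫ cA P k j (j - 1) (i + 1)) := by
      rw [hDc, neg_neg]
    have f6r := congrArg (fun z =>
      z ≫ (eA P t (j - 1) j (fun x y => sF P t k x y (j - 1)) (i + 1 + 1) (i + 1) ≫
        th P t j (i + 1) i)) f6
    simp only [Category.assoc, Preadditive.neg_comp] at f6r
    have hT : th P t j i (i - 1) ≫ (P.d (i - 1) i).f j =
        𝟙 ((P.X i).X j) - (P.d i (i + 1)).f j ≫ th P t j (i + 1) i := by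
      rw [comm_t P t j i (i + 1) (i - 1) rfl (by omega)]
      abel
    have fc : cA P k j (j - 1) i ≫
        eA P t (j - 1) j (fun x y => sF P t k x y (j - 1)) (i + 1) i =
        (k i).hom j (j - 1) ≫ (P.d i (i + 1)).f (j - 1) ≫
          eA P t (j - 1) j (fun x y => sF P t k x y (j - 1)) (i + 1) i -
        (P.d i (i + 1)).f j ≫ (k (i + 1)).hom j (j - 1) ≫
          eA P t (j - 1) j (fun x y => sF P t k x y (j - 1)) (i + 1) i := by
      unfold cA
      simp only [Preadditive.sub_comp, Category.assoc]
    rw [sF_eq P t k (i + 1) i j hj, sF_eq P t k i (i - 1) j hj]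
    unfold stepA
    simp only [Preadditive.comp_add, Preadditive.add_comp, Category.assoc]
    rw [hT]
    simp only [Preadditive.comp_sub, Preadditive.sub_comp, Category.comp_id,
      Preadditive.comp_neg, Category.assoc]
    rw [f2]
    rw [f5r]
    simp only [Preadditive.comp_neg]
    rw [f6r]
    rw [fc]
    try simp only [Preadditive.comp_neg, Preadditive.neg_comp, Category.assoc]
    abel
  · intro i i'
    by_cases h : i' + 1 = i
    · subst h
      have hK : (P.X (i' + 1)).d (j - 1) j ≫ (k (i' + 1)).hom j (j - 1) =
          𝟙 ((P.X (i' + 1)).X (j - 1)) -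
            (k (i' + 1)).hom (j - 1) (j - 2) ≫ (P.X (i' + 1)).d (j - 2) (j - 1) :=
        eq_sub_of_add_eq (comm_k P k (i' + 1) (j - 1) j (j - 2) (by omega) (by omega)).symm
      have E1 := E_lem P t k j hAp (i' + 1) i'
      have E2 := E_lem P t k j hAp (i' + 1 + 1) (i' + 1)
      have E2r := congrArg (fun z => z ≫ th P t j (i' + 1) i') E2
      simp only [Category.assoc, zero_comp] at E2r
      have hCd := Cd_lem P k j (i' + 1)
      have hCdr := congrArg (fun z =>
        z ≫ (eA P t (j - 1) j (fun x y => sF P t k x y (j - 1)) (i' + 1 + 1) (i' + 1) ≫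
          th P t j (i' + 1) i')) hCd
      simp only [Category.assoc, Preadditive.neg_comp] at hCdr
      rw [sF_eq P t k (i' + 1) i' j hj]
      unfold stepA
      simp only [Preadditive.comp_add, Category.assoc]
      rw [← Category.assoc ((P.X (i' + 1)).d (j - 1) j) ((k (i' + 1)).hom j (j - 1)) _, hK]
      rw [hCdr, E2r]
      simp only [Preadditive.sub_comp, Category.id_comp, Category.assoc]
      rw [E1]
      unfold eA
      simp only [Preadditive.comp_sub, Preadditive.sub_comp, comp_zero, neg_zero,
        Category.assoc]
      abel
    · rw [sF_off P t k i i' j h, sF_off P t k i i' (j - 1) h]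
      simp

lemma Qall (hz : ∀ j : ℤ, j < 0 → ∀ i, IsZero ((P.X i).X j)) :
    ∀ j : ℤ,
      (∀ i, 𝟙 ((P.X i).X j) =
        (P.d i (i + 1)).f j ≫ sF P t k (i + 1) i j +
          sF P t k i (i - 1) j ≫ (P.d (i - 1) i).f j) ∧
      (∀ i i', (P.X i).d (j - 1) j ≫ sF P t k i i' j =
        sF P t k i i' (j - 1) ≫ (P.X i').d (j - 1) j) := by
  have neg : ∀ j : ℤ, j < 0 →
      (∀ i, 𝟙 ((P.X i).X j) =
        (P.d i (i + 1)).f j ≫ sF P t k (i + 1) i j +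
          sF P t k i (i - 1) j ≫ (P.d (i - 1) i).f j) ∧
      (∀ i i', (P.X i).d (j - 1) j ≫ sF P t k i i' j =
        sF P t k i i' (j - 1) ≫ (P.X i').d (j - 1) j) := by
    intro j hj
    exact ⟨fun i => (hz j hj i).eq_of_src _ _,
      fun i i' => (hz (j - 1) (by omega) i).eq_of_src _ _⟩
  have main : ∀ n : ℕ, ∀ j : ℤ, j ≤ n →
      (∀ i, 𝟙 ((P.X i).X j) =
        (P.d i (i + 1)).f j ≫ sF P t k (i + 1) i j +
          sF P t k i (i - 1) j ≫ (P.d (i - 1) i).f j) ∧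
      (∀ i i', (P.X i).d (j - 1) j ≫ sF P t k i i' j =
        sF P t k i i' (j - 1) ≫ (P.X i').d (j - 1) j) := by
    intro n
    induction n with
    | zero =>
        intro j hj
        rcases lt_or_ge j 0 with h | h
        · exact neg j h
        · have hj0 : j = 0 := by omega
          subst hj0
          refine step_lem P t k 0 le_rfl ?_ ?_
          · intro i
            exact (hz (0 - 1) (by omega) i).eq_of_src _ _
          · intro a b
            exact ((hz (0 - 2) (by omega) a).eq_of_src _ _)
    | succ n ih =>
        intro j hj
        rcases le_or_gt j n with h | h
        · exact ih j h
        · have hj' : (0 : ℤ) ≤ j := by omega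
          have hprev := ih (j - 1) (by omega)
          have hAp := hprev.2
          rw [show j - 1 - 1 = j - 2 from by ring] at hAp
          exact step_lem P t k j hj' hprev.1 hAp
  intro j
  rcases lt_or_ge j 0 with h | h
  · exact neg j h
  · exact main j.toNat j (by omega)

/-- the contracting homotopy of the bicomplex -/
def mainHomotopy (hz : ∀ j : ℤ, j < 0 → ∀ i, IsZero ((P.X i).X j)) :
    Homotopy (𝟙 P) 0 where
  hom i i' :=
    { f := fun j => sF P t k i i' j
      comm' := by
        intro a b hab
        simp only [ComplexShape.up_Rel] at hab
        subst hab
        have h := (Qall P t k hz (a + 1)).2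
        rw [show a + 1 - 1 = a from by ring] at h
        exact (h i i').symm }
  zero i i' h := by
    apply HomologicalComplex.hom_ext
    intro j
    exact (sF_off P t k i i' j (by simpa using h)).trans rfl
  comm i := by
    rw [dNext_eq _ (show (ComplexShape.up ℤ).Rel i (i + 1) by simp),
      prevD_eq _ (show (ComplexShape.up ℤ).Rel (i - 1) i by simp)]
    apply HomologicalComplex.hom_ext
    intro j
    have h := (Qall P t k hz j).1 i
    simpa using h

end Aux12

/-- Let `R` be a ring and `P` an object of `K(Prj C(R))`, i.e. a complex of
projective complexes of `R`-modules (a bicomplex whose columns `P_i` are projective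
objects of `C(R)`), concentrated in non-negative rows: `P^j = 0` for `j < 0`.  Then `P`
is contractible if and only if each row complex `P^j ∈ K(Prj R)` is contractible, for all
`j ∈ ℤ`. -/
theorem contractible_iff_rows_contractible
    (R : Type) [Ring R]
    (P : CochainComplex (CochainComplex (ModuleCat R) ℤ) ℤ)
    (hproj : ∀ i : ℤ, Projective (P.X i))
    (hrows : ∀ j : ℤ, j < 0 → ∀ i : ℤ, IsZero ((P.X i).X j)) :
    Nonempty (Homotopy (𝟙 P) 0) ↔
      ∀ j : ℤ, Nonempty (Homotopy
        (𝟙 (((HomologicalComplex.eval (ModuleCat R) (ComplexShape.up ℤ) j).mapHomologicalComplex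
          (ComplexShape.up ℤ)).obj P)) 0) := by
  constructor
  · rintro ⟨H⟩ j
    refine ⟨(Homotopy.ofEq ?_).trans
      (((HomologicalComplex.eval (ModuleCat R) (ComplexShape.up ℤ) j).mapHomotopy H).trans
        (Homotopy.ofEq ?_))⟩
    · simp
    · simp
  · intro hyp
    exact ⟨Aux12.mainHomotopy P (fun j => (hyp j).some)
      (fun i => (proj_contractible (P.X i) (hproj i)).some) hrows⟩

end
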